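/- Let L : ℝⁿ × ℝⁿ × ℝ → ℝ be C¹ and define the Hamiltonian function H(q, v, p, z) = p·v − L(q, v, z) on the extended unified bundle W = ℝⁿ × ℝⁿ × ℝⁿ × ℝ. At a point w₀ = (q, v, p, z), a tangent vector X = (f, F, G, f₀) ∈ ℝⁿ × ℝⁿ × ℝⁿ × ℝ satisfies the contact equations dη(X, u) = dH_{w₀}(u) − (∂H/∂z)(w₀)·η(u) for all tangent vectors u, together with η(X) = −H(w₀), if and only if: f = v (the second-order condition), p = (∂L/∂v)(q, v, z) (the Legendre constraint defining W₁ = graph(FL)), G = (∂L/∂q)(q, v, z) + (∂L/∂z)(q, v, z)·p, and f₀ = L(q, v, z). (Coordinate derivation of the unified Lagrangian–Hamiltonian equations, showing the SODE condition and the Legendre map arise from the constraint algorithm.) -/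

import Mathlib

open scoped BigOperators

noncomputable section

/-- Points of `TQ × ℝ`, coordinates `(q, v, z)`. -/
abbrev LPt (n : ℕ) := (Fin n → ℝ) × (Fin n → ℝ) × ℝ

/-- Points/tangent vectors of the extended unified (Pontryagin) bundle
`W = ℝⁿ × ℝⁿ × ℝⁿ × ℝ`, coordinates `(q, v, p, z)`. -/
abbrev WPt (n : ℕ) := (Fin n → ℝ) × (Fin n → ℝ) × (Fin n → ℝ) × ℝ

/-- `∂L/∂qⁱ` at `x`. -/
def pderivQ {n : ℕ} (L : LPt n → ℝ) (x : LPt n) (i : Fin n) : ℝ :=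
  fderiv ℝ L x (Pi.single i (1 : ℝ), (0 : Fin n → ℝ), (0 : ℝ))

/-- `∂L/∂vⁱ` at `x`. -/
def pderivV {n : ℕ} (L : LPt n → ℝ) (x : LPt n) (i : Fin n) : ℝ :=
  fderiv ℝ L x ((0 : Fin n → ℝ), Pi.single i (1 : ℝ), (0 : ℝ))

/-- `∂L/∂z` at `x`. -/
def pderivZ {n : ℕ} (L : LPt n → ℝ) (x : LPt n) : ℝ :=
  fderiv ℝ L x ((0 : Fin n → ℝ), (0 : Fin n → ℝ), (1 : ℝ))

/-- The precontact form `η = dz − Σ pᵢ dqⁱ` on `W` at `x`, acting on `(a,b,c,d)`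
by `d − p·a`. -/
def unifiedEta {n : ℕ} (x w : WPt n) : ℝ := w.2.2.2 - ∑ i, x.2.2.1 i * w.1 i

/-- `dη((a,b,c,d),(a',b',c',d')) = a·c' − a'·c` on `W`. -/
def unifiedDEta {n : ℕ} (w w' : WPt n) : ℝ :=
  (∑ i, w.1 i * w'.2.2.1 i) - ∑ i, w'.1 i * w.2.2.1 i

/-- The unified Hamiltonian function `H(q, v, p, z) = p·v − L(q, v, z)` on `W`. -/
def unifiedH {n : ℕ} (L : LPt n → ℝ) (w : WPt n) : ℝ :=
  (∑ i, w.2.2.1 i * w.2.1 i) - L (w.1, w.2.1, w.2.2.2)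

/-- projection `W → TQ × ℝ` as a continuous linear map. -/
def projLW (n : ℕ) : WPt n →L[ℝ] LPt n :=
  (ContinuousLinearMap.fst ℝ _ _).prod
    (((ContinuousLinearMap.fst ℝ _ _).comp (ContinuousLinearMap.snd ℝ _ _)).prod
      ((ContinuousLinearMap.snd ℝ _ _).comp
        ((ContinuousLinearMap.snd ℝ _ _).comp (ContinuousLinearMap.snd ℝ _ _))))

@[simp] lemma projLW_apply {n : ℕ} (w : WPt n) : projLW n w = (w.1, w.2.1, w.2.2.2) := rfl

/-- `w ↦ w.2.2.1 i` as a continuous linear map. -/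
def Pmap (n : ℕ) (i : Fin n) : WPt n →L[ℝ] ℝ :=
  (ContinuousLinearMap.proj i).comp
    ((ContinuousLinearMap.fst ℝ _ _).comp
      ((ContinuousLinearMap.snd ℝ _ _).comp (ContinuousLinearMap.snd ℝ _ _)))

/-- `w ↦ w.2.1 i` as a continuous linear map. -/
def Vmap (n : ℕ) (i : Fin n) : WPt n →L[ℝ] ℝ :=
  (ContinuousLinearMap.proj i).comp
    ((ContinuousLinearMap.fst ℝ _ _).comp (ContinuousLinearMap.snd ℝ _ _))

@[simp] lemma Pmap_apply {n : ℕ} (i : Fin n) (w : WPt n) : Pmap n i w = w.2.2.1 i := rfl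
@[simp] lemma Vmap_apply {n : ℕ} (i : Fin n) (w : WPt n) : Vmap n i w = w.2.1 i := rfl

lemma hasFDerivH {n : ℕ} (L : LPt n → ℝ) (hL : ContDiff ℝ 1 L) (w₀ : WPt n) :
    HasFDerivAt (unifiedH L)
      ((∑ i, ((w₀.2.2.1 i) • Vmap n i + (w₀.2.1 i) • Pmap n i)) -
        (fderiv ℝ L (w₀.1, w₀.2.1, w₀.2.2.2)).comp (projLW n)) w₀ := by
  have h1 : HasFDerivAt (fun w : WPt n => ∑ i, w.2.2.1 i * w.2.1 i)
      (∑ i, ((w₀.2.2.1 i) • Vmap n i + (w₀.2.1 i) • Pmap n i)) w₀ := by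
    refine HasFDerivAt.fun_sum fun i _ => ?_
    exact (Pmap n i).hasFDerivAt.mul (Vmap n i).hasFDerivAt
  have h2 : HasFDerivAt (fun w : WPt n => L (w.1, w.2.1, w.2.2.2))
      ((fderiv ℝ L (w₀.1, w₀.2.1, w₀.2.2.2)).comp (projLW n)) w₀ :=
    ((hL.differentiable one_ne_zero).differentiableAt.hasFDerivAt).comp w₀ (projLW n).hasFDerivAt
  exact h1.sub h2

lemma fderivH_apply {n : ℕ} (L : LPt n → ℝ) (hL : ContDiff ℝ 1 L) (w₀ u : WPt n) :
    fderiv ℝ (unifiedH L) w₀ u =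
      (∑ i, (w₀.2.2.1 i * u.2.1 i + w₀.2.1 i * u.2.2.1 i)) -
        fderiv ℝ L (w₀.1, w₀.2.1, w₀.2.2.2) (u.1, u.2.1, u.2.2.2) := by
  rw [(hasFDerivH L hL w₀).fderiv]
  simp [ContinuousLinearMap.sum_apply, smul_eq_mul]

lemma fderivL_expand {n : ℕ} (L : LPt n → ℝ) (x : LPt n) (u : LPt n) :
    fderiv ℝ L x u = (∑ i, u.1 i * pderivQ L x i) + (∑ i, u.2.1 i * pderivV L x i)
      + u.2.2 * pderivZ L x := by
  have hu : u = (∑ i, u.1 i • ((Pi.single i 1 : Fin n → ℝ), (0 : Fin n → ℝ), (0:ℝ)))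
      + (∑ i, u.2.1 i • ((0 : Fin n → ℝ), (Pi.single i 1 : Fin n → ℝ), (0:ℝ)))
      + u.2.2 • ((0 : Fin n → ℝ), (0 : Fin n → ℝ), (1:ℝ)) := by
    refine Prod.ext ?_ (Prod.ext ?_ ?_)
    · funext j
      simp [Prod.fst_sum, Finset.sum_apply, Pi.single_apply, mul_ite]
    · funext j
      simp [Prod.fst_sum, Prod.snd_sum, Finset.sum_apply, Pi.single_apply, mul_ite]
    · simp [Prod.snd_sum]
  conv_lhs => rw [hu]
  simp only [map_add, map_sum, map_smul, smul_eq_mul, pderivQ, pderivV, pderivZ]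

theorem unified_contact_equations_coordinates (n : ℕ) (L : LPt n → ℝ)
    (hL : ContDiff ℝ 1 L) (w₀ X : WPt n) :
    ((∀ u : WPt n, unifiedDEta X u =
        fderiv ℝ (unifiedH L) w₀ u -
          fderiv ℝ (unifiedH L) w₀
              ((0 : Fin n → ℝ), (0 : Fin n → ℝ), (0 : Fin n → ℝ), (1 : ℝ)) *
            unifiedEta w₀ u) ∧
      unifiedEta w₀ X = -unifiedH L w₀) ↔
    (X.1 = w₀.2.1 ∧
      w₀.2.2.1 = (fun i => pderivV L (w₀.1, w₀.2.1, w₀.2.2.2) i) ∧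
      X.2.2.1 = (fun i => pderivQ L (w₀.1, w₀.2.1, w₀.2.2.2) i +
        pderivZ L (w₀.1, w₀.2.1, w₀.2.2.2) * w₀.2.2.1 i) ∧
      X.2.2.2 = L (w₀.1, w₀.2.1, w₀.2.2.2)) := by
  set x : LPt n := (w₀.1, w₀.2.1, w₀.2.2.2) with hx
  have hR : fderiv ℝ (unifiedH L) w₀
      ((0 : Fin n → ℝ), (0 : Fin n → ℝ), (0 : Fin n → ℝ), (1 : ℝ)) = -pderivZ L x := by
    rw [fderivH_apply L hL, fderivL_expand]
    simp
    rfl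
  have key : ∀ u : WPt n,
      fderiv ℝ (unifiedH L) w₀ u = (∑ i, (w₀.2.2.1 i * u.2.1 i + w₀.2.1 i * u.2.2.1 i))
        - ((∑ i, u.1 i * pderivQ L x i) + (∑ i, u.2.1 i * pderivV L x i)
            + u.2.2.2 * pderivZ L x) := by
    intro u
    rw [fderivH_apply L hL, fderivL_expand]
  constructor
  · rintro ⟨h1, h2⟩
    have hf : X.1 = w₀.2.1 := by
      funext i
      have := h1 ((0 : Fin n → ℝ), (0 : Fin n → ℝ), Pi.single i (1:ℝ), (0:ℝ))
      rw [key, hR] at this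
      simpa [unifiedDEta, unifiedEta, Pi.single_apply, mul_ite] using this
    have hp : w₀.2.2.1 = fun i => pderivV L x i := by
      funext i
      have := h1 ((0 : Fin n → ℝ), Pi.single i (1:ℝ), (0 : Fin n → ℝ), (0:ℝ))
      rw [key, hR] at this
      simp [unifiedDEta, unifiedEta, Pi.single_apply, mul_ite] at this
      linarith [this]
    have hG : X.2.2.1 = fun i => pderivQ L x i + pderivZ L x * w₀.2.2.1 i := by
      funext i
      have := h1 (Pi.single i (1:ℝ), (0 : Fin n → ℝ), (0 : Fin n → ℝ), (0:ℝ))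
      rw [key, hR] at this
      simp [unifiedDEta, unifiedEta, Pi.single_apply, mul_ite, ite_mul] at this
      linarith [this]
    have hz : X.2.2.2 = L x := by
      simp only [unifiedEta, unifiedH, hf] at h2
      have : X.2.2.2 = L x := by linarith [h2]
      exact this
    exact ⟨hf, hp, hG, hz⟩
  · rintro ⟨hf, hp, hG, hz⟩
    constructor
    · intro u
      rw [key, hR]
      simp only [unifiedDEta, unifiedEta, hf, hG]
      have S1 : ∑ i, u.1 i * (pderivQ L x i + pderivZ L x * w₀.2.2.1 i)
          = (∑ i, u.1 i * pderivQ L x i) + pderivZ L x * ∑ i, w₀.2.2.1 i * u.1 i := by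
        rw [Finset.mul_sum, ← Finset.sum_add_distrib]
        exact Finset.sum_congr rfl fun i _ => by ring
      have S2 : ∑ i, (w₀.2.2.1 i * u.2.1 i + w₀.2.1 i * u.2.2.1 i)
          = (∑ i, w₀.2.2.1 i * u.2.1 i) + ∑ i, w₀.2.1 i * u.2.2.1 i := Finset.sum_add_distrib
      have S3 : ∑ i, w₀.2.2.1 i * u.2.1 i = ∑ i, u.2.1 i * pderivV L x i := by
        rw [hp]; exact Finset.sum_congr rfl fun i _ => mul_comm _ _
      rw [S1, S2, S3]; ring
    · simp only [unifiedEta, unifiedH, hf, hz, ← hx]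
      ring
end
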